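/- Let τ be a topology on ω, let x ∈ ω, and let 𝒰 = {U ⊆ ω : x ∈ Int_τ(U)}, viewed as a subspace of 𝒫(ω). For each n ∈ ω let A_n = {a^n_k : k ∈ ω} be a subset of ω with x ∈ cl_τ(A_n), with a fixed enumeration, and for U ∈ 𝒰 define φ(U)(n) = min{k ∈ ω : a^n_k ∈ U}. If 𝒰 is Menger as a subspace of 𝒫(ω), then Z = {z ∈ ω^ω : there exists U ∈ 𝒰 with z(n) ≤ φ(U)(n) for all n} is a Menger subspace of the Baire space ω^ω. -/

import Mathlib

open Set Topology Filter

/-- A topological space is *Menger* if for every sequence of open covers there are finite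
subfamilies whose unions form a cover. -/
def IsMenger (X : Type*) [TopologicalSpace X] : Prop :=
  ∀ U : ℕ → Set (Set X),
    (∀ n, ∀ u ∈ U n, IsOpen u) → (∀ n, ⋃₀ U n = Set.univ) →
    ∃ V : ℕ → Set (Set X),
      (∀ n, V n ⊆ U n ∧ (V n).Finite) ∧ (⋃ n, ⋃₀ V n) = Set.univ

/-- The Menger property for a subspace. -/
def IsMengerSet {X : Type*} [TopologicalSpace X] (S : Set X) : Prop :=
  IsMenger ↥S

/-- The Cantor-space topology on the power set `𝒫(α)`, identifying a subset with its
characteristic function in the product of discrete two-point spaces. -/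
def cantorTop (α : Type*) : TopologicalSpace (Set α) :=
  TopologicalSpace.induced (fun (S : Set α) (a : α) => a ∈ S)
    (@Pi.topologicalSpace α (fun _ => Prop) (fun _ => ⊥))

/-- `C_p(X)`: continuous real-valued functions with the topology of pointwise convergence,
i.e. the subspace topology inherited from `ℝ^X`. -/
abbrev Cp (X : Type*) [TopologicalSpace X] : Type _ := {f : X → ℝ // Continuous f}

/-- The zero function as an element of `C_p(X)`. -/
instance (X : Type*) [TopologicalSpace X] : Zero (Cp X) :=
  ⟨⟨fun _ => 0, continuous_const⟩⟩

/-- Continuous images of Menger spaces are Menger. -/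
theorem isMenger_of_surjective {X Y : Type*} [TopologicalSpace X] [TopologicalSpace Y]
    {f : X → Y} (hf : Continuous f) (hs : Function.Surjective f) (hX : IsMenger X) :
    IsMenger Y := by
  intro U hUo hUc
  obtain ⟨V', hV', hV'c⟩ := hX (fun n => (f ⁻¹' ·) '' U n)
    (by rintro n _ ⟨u, hu, rfl⟩; exact (hUo n u hu).preimage hf)
    (by
      intro n
      apply eq_univ_of_forall
      intro xx
      have : f xx ∈ ⋃₀ U n := by rw [hUc n]; trivial
      obtain ⟨u, hu, hxu⟩ := this
      exact ⟨f ⁻¹' u, ⟨u, hu, rfl⟩, hxu⟩)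
  refine ⟨fun n => {u ∈ U n | f ⁻¹' u ∈ V' n}, fun n => ⟨fun u hu => hu.1, ?_⟩, ?_⟩
  · have hinj : Function.Injective (f ⁻¹' · : Set Y → Set X) := hs.preimage_injective
    exact (((hV' n).2.preimage (hinj.injOn)).subset (fun u hu => hu.2))
  · apply eq_univ_of_forall
    intro y
    obtain ⟨xx, rfl⟩ := hs y
    have : xx ∈ ⋃ n, ⋃₀ V' n := by rw [hV'c]; trivial
    obtain ⟨_, ⟨n, rfl⟩, v', hv', hxv'⟩ := this
    obtain ⟨u, hu, rfl⟩ := (hV' n).1 hv'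
    exact mem_iUnion.2 ⟨n, u, ⟨hu, hv'⟩, hxv'⟩

/-- The product of a Menger space with a compact space is Menger. -/
theorem isMenger_prod_compact {X K : Type*} [TopologicalSpace X] [TopologicalSpace K]
    [CompactSpace K] (hX : IsMenger X) : IsMenger (X × K) := by
  intro U hUo hUc
  have key : ∀ n (m : X), ∃ O : Set X, IsOpen O ∧ m ∈ O ∧
      ∃ V ⊆ U n, V.Finite ∧ O ×ˢ (univ : Set K) ⊆ ⋃₀ V := by
    intro n m
    have hcov : ({m} : Set X) ×ˢ (univ : Set K) ⊆ ⋃ u : U n, (u : Set (X × K)) := by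
      intro p _
      have : p ∈ ⋃₀ U n := by rw [hUc n]; trivial
      obtain ⟨u, hu, hpu⟩ := this
      exact mem_iUnion.2 ⟨⟨u, hu⟩, hpu⟩
    obtain ⟨t, ht⟩ := (isCompact_singleton.prod isCompact_univ).elim_finite_subcover
      (fun u : U n => (u : Set (X × K))) (fun u => hUo n u u.2) hcov
    have hopen : IsOpen (⋃ u ∈ t, (u : Set (X × K))) :=
      isOpen_biUnion fun u _ => hUo n u u.2
    obtain ⟨O, W, hO, _, hmO, hKW, hsub⟩ :=
      generalized_tube_lemma isCompact_singleton isCompact_univ hopen ht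
    refine ⟨O, hO, hmO rfl, Subtype.val '' (t : Set (U n)), ?_, t.finite_toSet.image _, ?_⟩
    · rintro _ ⟨u, _, rfl⟩; exact u.2
    · intro p hp
      have : p ∈ ⋃ u ∈ t, (u : Set (X × K)) :=
        hsub ⟨hp.1, hKW (mem_univ _)⟩
      obtain ⟨_, ⟨u, rfl⟩, _, ⟨hu, rfl⟩, hpu⟩ := this
      exact ⟨u, ⟨u, hu, rfl⟩, hpu⟩
  obtain ⟨W, hW, hWc⟩ := hX
    (fun n => {O : Set X | IsOpen O ∧ ∃ V ⊆ U n, V.Finite ∧ O ×ˢ (univ : Set K) ⊆ ⋃₀ V})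
    (fun n O hO => hO.1)
    (by
      intro n
      apply eq_univ_of_forall
      intro m
      obtain ⟨O, hO, hmO, V, hV1, hV2, hV3⟩ := key n m
      exact ⟨O, ⟨hO, V, hV1, hV2, hV3⟩, hmO⟩)
  have hsel : ∀ n, ∀ w ∈ W n, ∃ V ⊆ U n, V.Finite ∧ w ×ˢ (univ : Set K) ⊆ ⋃₀ V :=
    fun n w hw => ((hW n).1 hw).2
  choose Vsel hVsub hVfin hVcov using hsel
  refine ⟨fun n => ⋃ w, ⋃ h : w ∈ W n, Vsel n w h, fun n => ⟨?_, ?_⟩, ?_⟩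
  · rintro u hu
    simp only [mem_iUnion] at hu
    obtain ⟨w, hw, hu⟩ := hu
    exact hVsub n w hw hu
  · exact Set.Finite.biUnion' (hW n).2 (fun w hw => hVfin n w hw)
  · apply eq_univ_of_forall
    rintro ⟨m, k⟩
    have : m ∈ ⋃ n, ⋃₀ W n := by rw [hWc]; trivial
    obtain ⟨_, ⟨n, rfl⟩, w, hw, hmw⟩ := this
    have : (m, k) ∈ ⋃₀ Vsel n w hw := hVcov n w hw ⟨hmw, mem_univ _⟩
    obtain ⟨v, hv, hpv⟩ := this
    exact mem_iUnion.2 ⟨n, v, mem_iUnion.2 ⟨w, mem_iUnion.2 ⟨hw, hv⟩⟩, hpv⟩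

section Cantor

theorem cantorTop_isOpen_mem (c : ℕ) : IsOpen[cantorTop ℕ] {U : Set ℕ | c ∈ U} := by
  letI : TopologicalSpace (Set ℕ) := cantorTop ℕ
  letI : TopologicalSpace Prop := ⊥
  haveI : DiscreteTopology Prop := ⟨rfl⟩
  have hc : Continuous (fun (S : Set ℕ) (a : ℕ) => a ∈ S) := continuous_induced_dom
  have : IsOpen {f : ℕ → Prop | f c} := by
    have := (continuous_apply (A := fun _ : ℕ => Prop) c)
    exact this.isOpen_preimage {p : Prop | p} (isOpen_discrete _)
  exact this.preimage hc

theorem cantorTop_isOpen_not_mem (c : ℕ) : IsOpen[cantorTop ℕ] {U : Set ℕ | c ∉ U} := by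
  letI : TopologicalSpace (Set ℕ) := cantorTop ℕ
  letI : TopologicalSpace Prop := ⊥
  haveI : DiscreteTopology Prop := ⟨rfl⟩
  have hc : Continuous (fun (S : Set ℕ) (a : ℕ) => a ∈ S) := continuous_induced_dom
  have : IsOpen {f : ℕ → Prop | ¬ f c} := by
    have := (continuous_apply (A := fun _ : ℕ => Prop) c)
    exact this.isOpen_preimage {p : Prop | ¬ p} (isOpen_discrete _)
  exact this.preimage hc

end Cantor

/-- A map into `ℕ` (with any topology) all of whose fibers are open is continuous. -/
theorem continuous_into_nat {α : Type*} [TopologicalSpace α] (t : TopologicalSpace ℕ)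
    {f : α → ℕ} (h : ∀ m, IsOpen (f ⁻¹' {m})) : Continuous[_, t] f := by
  rw [continuous_def]
  intro s _
  have : f ⁻¹' s = ⋃ m ∈ s, f ⁻¹' {m} := by ext y; simp
  rw [this]; exact isOpen_biUnion fun m _ => h m

theorem ici_open_enat (m : ℕ) : IsOpen (Ici ((m : ℕ∞))) := by
  cases m with
  | zero =>
    have : Ici ((0 : ℕ) : ℕ∞) = univ := eq_univ_of_forall fun s => by simp
    rw [this]; exact isOpen_univ
  | succ k =>
    have : Ici ((k+1 : ℕ) : ℕ∞) = Ioi ((k : ℕ) : ℕ∞) := by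
      ext s
      simp only [mem_Ici, mem_Ioi]
      push_cast
      rw [ENat.add_one_le_iff (by simp)]
    rw [this]
    exact isOpen_Ioi

theorem dominated_set_menger (τ : TopologicalSpace ℕ) (x : ℕ) (a : ℕ → ℕ → ℕ)
    (ha : ∀ n, x ∈ @closure _ τ (Set.range (a n)))
    (hU : @IsMengerSet (Set ℕ) (cantorTop ℕ) {U : Set ℕ | x ∈ @interior _ τ U}) :
    IsMengerSet {z : ℕ → ℕ |
      ∃ U : Set ℕ, x ∈ @interior _ τ U ∧ ∀ n, z n ≤ sInf {k | a n k ∈ U}} := by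
  letI : TopologicalSpace (Set ℕ) := cantorTop ℕ
  set 𝒰 : Set (Set ℕ) := {U : Set ℕ | x ∈ @interior _ τ U} with h𝒰
  set Z : Set (ℕ → ℕ) := {z : ℕ → ℕ |
      ∃ U : Set ℕ, x ∈ @interior _ τ U ∧ ∀ n, z n ≤ sInf {k | a n k ∈ U}} with hZ
  -- φ
  set φ : ↥𝒰 → ℕ → ℕ := fun u n => sInf {k | a n k ∈ u.1} with hφ
  have hne : ∀ (u : ↥𝒰) n, {k | a n k ∈ u.1}.Nonempty := by
    intro u n
    have hint : x ∈ @interior _ τ u.1 := u.2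
    obtain ⟨y, hy1, hy2⟩ := mem_closure_iff.1 (ha n) _ isOpen_interior hint
    obtain ⟨k, rfl⟩ := hy2
    exact ⟨k, show a n k ∈ (u : Set ℕ) from interior_subset hy1⟩
  have hφ_fiber : ∀ n m, {u : ↥𝒰 | φ u n = m} =
      {u : ↥𝒰 | a n m ∈ u.1 ∧ ∀ j < m, a n j ∉ u.1} := by
    intro n m
    ext u
    simp only [mem_setOf_eq, hφ]
    constructor
    · rintro rfl
      exact ⟨Nat.sInf_mem (hne u n),
        fun j hj => Nat.notMem_of_lt_sInf (s := {k | a n k ∈ u.1}) hj⟩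
    · rintro ⟨h1, h2⟩
      refine le_antisymm (Nat.sInf_le h1) (le_of_not_gt fun hlt => ?_)
      exact h2 _ hlt (Nat.sInf_mem (hne u n))
  have hφ_open : ∀ n (s : Set ℕ), IsOpen ((fun u : ↥𝒰 => φ u n) ⁻¹' s) := by
    intro n s
    have hrw : (fun u : ↥𝒰 => φ u n) ⁻¹' s = ⋃ m ∈ s, {u : ↥𝒰 | φ u n = m} := by
      ext u; simp
    rw [hrw]
    apply isOpen_biUnion
    intro m _
    rw [hφ_fiber n m]
    have : {u : ↥𝒰 | a n m ∈ u.1 ∧ ∀ j < m, a n j ∉ u.1} =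
        Subtype.val ⁻¹' ({U : Set ℕ | a n m ∈ U} ∩ ⋂ j ∈ Finset.range m, {U : Set ℕ | a n j ∉ U}) := by
      ext u
      simp [Finset.mem_range]
    rw [this]
    apply IsOpen.preimage continuous_subtype_val
    apply IsOpen.inter (cantorTop_isOpen_mem _)
    exact isOpen_biInter_finset (fun j _ => cantorTop_isOpen_not_mem _)
  -- the continuous surjection
  set g : ↥𝒰 × (ℕ → ℕ∞) → (ℕ → ℕ) :=
    fun p n => (min (p.2 n) ((φ p.1 n : ℕ) : ℕ∞)).toNat with hg
  have hg_le : ∀ p n, g p n ≤ φ p.1 n := by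
    intro p n
    exact ENat.toNat_le_of_le_coe (min_le_right _ _)
  have hg_mem : ∀ p, g p ∈ Z := by
    intro p
    exact ⟨p.1.1, p.1.2, fun n => hg_le p n⟩
  have hg_surj : ∀ z ∈ Z, ∃ p, g p = z := by
    rintro z ⟨U, hU1, hU2⟩
    refine ⟨⟨⟨U, hU1⟩, fun n => (z n : ℕ∞)⟩, ?_⟩
    funext n
    have hzφ : z n ≤ φ ⟨U, hU1⟩ n := hU2 n
    have : min ((z n : ℕ∞)) ((φ (⟨U, hU1⟩ : ↥𝒰) n : ℕ) : ℕ∞) = (z n : ℕ∞) := by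
      apply min_eq_left
      exact_mod_cast hzφ
    simp only [hg, this, ENat.toNat_coe]
  -- continuity of g
  have hg_cont : Continuous g := by
    apply continuous_pi
    intro n
    apply continuous_into_nat
    intro m
    have hfib : (fun p => g p n) ⁻¹' {m} =
        ({u : ↥𝒰 | φ u n = m} ×ˢ {t : ℕ → ℕ∞ | (m : ℕ∞) ≤ t n}) ∪
        ({u : ↥𝒰 | m ≤ φ u n} ×ˢ {t : ℕ → ℕ∞ | t n = (m : ℕ∞)}) := by
      ext ⟨u, t⟩
      simp only [mem_preimage, mem_singleton_iff, mem_union, mem_prod, mem_setOf_eq, hg]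
      have hmin_ne : min (t n) ((φ u n : ℕ) : ℕ∞) ≠ ⊤ :=
        ne_top_of_le_ne_top (ENat.coe_ne_top _) (min_le_right _ _)
      constructor
      · intro h
        have hmin : min (t n) ((φ u n : ℕ) : ℕ∞) = (m : ℕ∞) := by
          rw [← h, ENat.coe_toNat hmin_ne]
        rcases min_eq_iff.1 hmin with ⟨h1, h2⟩ | ⟨h1, h2⟩
        · right
          refine ⟨?_, h1⟩
          rw [h1] at h2
          exact_mod_cast h2
        · left
          refine ⟨by exact_mod_cast h1, ?_⟩
          exact h1 ▸ h2
      · rintro (⟨h1, h2⟩ | ⟨h1, h2⟩)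
        · have : min (t n) ((φ u n : ℕ) : ℕ∞) = ((φ u n : ℕ) : ℕ∞) := by
            apply min_eq_right
            rw [← h1] at h2
            exact h2
          rw [this, ENat.toNat_coe, h1]
        · have : min (t n) ((φ u n : ℕ) : ℕ∞) = (m : ℕ∞) := by
            rw [h2]
            apply min_eq_left
            exact_mod_cast h1
          rw [this, ENat.toNat_coe]
    rw [hfib]
    apply IsOpen.union
    · apply IsOpen.prod
      · exact hφ_open n {m}
      · show IsOpen ((fun t : ℕ → ℕ∞ => t n) ⁻¹' Ici (m : ℕ∞))
        exact (ici_open_enat m).preimage (continuous_apply n)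
    · apply IsOpen.prod
      · exact hφ_open n (Ici m)
      · show IsOpen ((fun t : ℕ → ℕ∞ => t n) ⁻¹' {(m : ℕ∞)})
        exact (ENat.isOpen_singleton (ENat.coe_ne_top m)).preimage (continuous_apply n)
  -- assemble
  have hM : IsMenger (↥𝒰 × (ℕ → ℕ∞)) := isMenger_prod_compact hU
  have hgs : Function.Surjective (fun p : ↥𝒰 × (ℕ → ℕ∞) => (⟨g p, hg_mem p⟩ : ↥Z)) := by
    rintro ⟨z, hz⟩
    obtain ⟨p, hp⟩ := hg_surj z hz
    exact ⟨p, Subtype.ext hp⟩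
  exact isMenger_of_surjective (hg_cont.subtype_mk hg_mem) hgs hM
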